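/- Let a_0, a_1, …, a_n be integers with a_0 = a_n = 0 and |a_i − a_{i−1}| = 1 for all 1 ≤ i ≤ n. Then ∑_{i=1}^{n} (a_{i−1} + a_i) = 2·∑_{i ∈ T} a_i² − 2·∑_{i ∈ t} a_i², where T = {i : 0 < i < n, a_{i−1} < a_i and a_i > a_{i+1}} and t = {i : 0 < i < n, a_{i−1} > a_i and a_i < a_{i+1}}. -/

import Mathlib

/-- Abel summation / telescoping identity. -/
lemma abel_aux (s b : ℕ → ℤ) : ∀ n : ℕ,
    ∑ i ∈ Finset.Icc 1 n, s i * (b i - b (i - 1)) =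
      ∑ i ∈ Finset.Icc 1 n, (s i - s (i + 1)) * b i + s (n + 1) * b n - s 1 * b 0 := by
  intro n
  induction n with
  | zero => simp
  | succ n ih =>
    rw [Finset.sum_Icc_succ_top (by omega), Finset.sum_Icc_succ_top (by omega), ih]
    have hb : n + 1 - 1 = n := by omega
    rw [hb]; ring

/-- The discrete identity behind Lemma 6.2: for a unit-step integer walk with
`a 0 = a n = 0`, the sum `∑ (a (i-1) + a i)` equals twice the sum of squares of
the values at local maxima minus twice the sum of squares at local minima. -/
theorem width_eq_squares (n : ℕ) (a : ℕ → ℤ)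
    (h0 : a 0 = 0) (hend : a n = 0)
    (hstep : ∀ i, 1 ≤ i → i ≤ n → a i - a (i - 1) = 1 ∨ a i - a (i - 1) = -1) :
    ∑ i ∈ Finset.Icc 1 n, (a (i - 1) + a i) =
      2 * ∑ i ∈ (Finset.Ico 1 n).filter
            (fun i => a (i - 1) < a i ∧ a i > a (i + 1)), (a i) ^ 2
      - 2 * ∑ i ∈ (Finset.Ico 1 n).filter
            (fun i => a (i - 1) > a i ∧ a i < a (i + 1)), (a i) ^ 2 := by
  rcases Nat.eq_zero_or_pos n with hn | hn
  · subst hn; simp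
  have key : ∀ i ∈ Finset.Icc 1 n,
      a (i - 1) + a i = (a i - a (i - 1)) * ((a i) ^ 2 - (a (i - 1)) ^ 2) := by
    intro i hi
    simp only [Finset.mem_Icc] at hi
    rcases hstep i hi.1 hi.2 with h | h
    · linear_combination (-(a (i - 1) + a i) * (a i - a (i - 1) + 1)) * h
    · linear_combination (-(a (i - 1) + a i) * (a i - a (i - 1) - 1)) * h
  rw [Finset.sum_congr rfl key]
  have habel := abel_aux (fun i => a i - a (i - 1)) (fun i => (a i) ^ 2) n
  rw [habel, h0, hend]
  have hIcc : Finset.Icc 1 n = Finset.Ico 1 (n + 1) := by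
    rw [Finset.Ico_add_one_right_eq_Icc]
  rw [hIcc, Finset.sum_Ico_succ_top hn]
  have hn1 : n + 1 - 1 = n := by omega
  rw [hn1, hend]
  rw [Finset.sum_filter, Finset.sum_filter, Finset.mul_sum, Finset.mul_sum,
    ← Finset.sum_sub_distrib]
  have hmain : ∀ i ∈ Finset.Ico 1 n,
      (a i - a (i - 1) - (a (i + 1) - a (i + 1 - 1))) * (a i) ^ 2 =
        2 * (if a (i - 1) < a i ∧ a i > a (i + 1) then (a i) ^ 2 else 0) -
        2 * (if a (i - 1) > a i ∧ a i < a (i + 1) then (a i) ^ 2 else 0) := by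
    intro i hi
    simp only [Finset.mem_Ico] at hi
    have hadd : i + 1 - 1 = i := by omega
    rw [hadd]
    have h1 := hstep i hi.1 (by omega)
    have h2 := hstep (i + 1) (by omega) (by omega)
    rw [hadd] at h2
    rcases h1 with h1 | h1 <;> rcases h2 with h2 | h2
    · rw [if_neg (by rintro ⟨_, hq⟩; linarith), if_neg (by rintro ⟨hq, _⟩; linarith)]
      linear_combination (a i) ^ 2 * h1 - (a i) ^ 2 * h2
    · rw [if_pos ⟨by linarith, by linarith⟩, if_neg (by rintro ⟨hq, _⟩; linarith)]
      linear_combination (a i) ^ 2 * h1 - (a i) ^ 2 * h2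
    · rw [if_neg (by rintro ⟨hq, _⟩; linarith), if_pos ⟨by linarith, by linarith⟩]
      linear_combination (a i) ^ 2 * h1 - (a i) ^ 2 * h2
    · rw [if_neg (by rintro ⟨hq, _⟩; linarith), if_neg (by rintro ⟨_, hq⟩; linarith)]
      linear_combination (a i) ^ 2 * h1 - (a i) ^ 2 * h2
  rw [Finset.sum_congr rfl hmain]
  ring
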